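/- If r ∈ R is an element whose image ι(r) in A lies in the ideal of A generated by the classes x̄ and ȳ of x and y, then r ∈ tR. Consequently, if D̃ is a k-derivation of A mapping ι(R) into itself, then D̃(ι(t)) lies in ι(tR). -/

import Mathlib

set_option maxHeartbeats 1000000


noncomputable section

/-- The ideal `(xy − t)` of `R[[x,y]]`, where `R[[x,y]]` is formalized as
`MvPowerSeries (Fin 2) R` with `x` the variable `0` and `y` the variable `1`. -/
def nodeIdeal (R : Type*) [CommRing R] (t : R) : Ideal (MvPowerSeries (Fin 2) R) :=
  Ideal.span
    {(MvPowerSeries.X 0 : MvPowerSeries (Fin 2) R) * MvPowerSeries.X 1 -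
      (MvPowerSeries.C t : MvPowerSeries (Fin 2) R)}

/-- The complete local model `A = R[[x,y]]/(xy − t)` of a one-parameter smoothing
of a node. -/
abbrev NodeAlgebra (R : Type*) [CommRing R] (t : R) : Type _ :=
  MvPowerSeries (Fin 2) R ⧸ nodeIdeal R t

/-!
STATEMENT 7 (Example 4.4 of the paper, converse direction).

Let `k` be a commutative ring, `R` a commutative `k`-algebra, `t ∈ R` and
`A := R[[x,y]]/(xy − t)` with structure map `ι : R → A`.  If `r ∈ R` has
`ι(r) ∈ (x̄, ȳ) ⊆ A` then `r ∈ tR`.  Consequently, every `k`-derivation `D̃` of `A`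
mapping `ι(R)` into itself satisfies `D̃(ι t) ∈ ι(tR)`.
-/

theorem stmt7 (k R : Type*) [CommRing k] [CommRing R] [Algebra k R] (t : R) :
    (∀ r : R,
      algebraMap R (NodeAlgebra R t) r ∈
        Ideal.span {Ideal.Quotient.mk (nodeIdeal R t) (MvPowerSeries.X 0),
          Ideal.Quotient.mk (nodeIdeal R t) (MvPowerSeries.X 1)} →
      r ∈ Ideal.span ({t} : Set R)) ∧
    (∀ Dt : Derivation k (NodeAlgebra R t) (NodeAlgebra R t),
      (∀ r : R, ∃ r' : R,
        Dt (algebraMap R (NodeAlgebra R t) r) = algebraMap R (NodeAlgebra R t) r') →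
      ∃ s : R, Dt (algebraMap R (NodeAlgebra R t) t) = algebraMap R (NodeAlgebra R t) (t * s)) := by
  -- the ring hom `R[[x,y]] → R/(t)` sending a power series to the class of its
  -- constant coefficient
  set φ : MvPowerSeries (Fin 2) R →+* R ⧸ Ideal.span ({t} : Set R) :=
    (Ideal.Quotient.mk (Ideal.span ({t} : Set R))).comp
      (MvPowerSeries.constantCoeff : MvPowerSeries (Fin 2) R →+* R) with hφ
  have hker : nodeIdeal R t ≤ RingHom.ker φ := by
    rw [nodeIdeal, Ideal.span_le]
    rintro p hp
    simp only [Set.mem_singleton_iff] at hp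
    subst hp
    rw [SetLike.mem_coe, RingHom.mem_ker, hφ, RingHom.comp_apply, map_sub, map_mul,
      MvPowerSeries.constantCoeff_X, MvPowerSeries.constantCoeff_X,
      MvPowerSeries.constantCoeff_C, zero_mul, zero_sub, map_neg, neg_eq_zero]
    exact (Ideal.Quotient.eq_zero_iff_mem).2 (Ideal.mem_span_singleton_self t)
  -- the induced map `A → R/(t)`
  set ψ : NodeAlgebra R t →+* R ⧸ Ideal.span ({t} : Set R) :=
    Ideal.Quotient.lift (nodeIdeal R t) φ (fun a ha => hker ha) with hψ
  have hψX : ∀ i : Fin 2,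
      ψ (Ideal.Quotient.mk (nodeIdeal R t) (MvPowerSeries.X i)) = 0 := by
    intro i
    simp [hψ, hφ]
  have hψalg : ∀ r : R, ψ (algebraMap R (NodeAlgebra R t) r) =
      Ideal.Quotient.mk (Ideal.span ({t} : Set R)) r := by
    intro r
    have : algebraMap R (NodeAlgebra R t) r =
        Ideal.Quotient.mk (nodeIdeal R t) (MvPowerSeries.C r : MvPowerSeries (Fin 2) R) := rfl
    rw [this]
    simp [hψ, hφ]
  have part1 : ∀ r : R,
      algebraMap R (NodeAlgebra R t) r ∈
        Ideal.span {Ideal.Quotient.mk (nodeIdeal R t) (MvPowerSeries.X 0),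
          Ideal.Quotient.mk (nodeIdeal R t) (MvPowerSeries.X 1)} →
      r ∈ Ideal.span ({t} : Set R) := by
    intro r hr
    have hle : Ideal.span {Ideal.Quotient.mk (nodeIdeal R t) (MvPowerSeries.X 0),
        Ideal.Quotient.mk (nodeIdeal R t) (MvPowerSeries.X 1)} ≤ RingHom.ker ψ := by
      rw [Ideal.span_le]
      rintro a ha
      simp only [Set.mem_insert_iff, Set.mem_singleton_iff] at ha
      rcases ha with h | h <;> subst h <;> simp [RingHom.mem_ker, hψX]
    have : ψ (algebraMap R (NodeAlgebra R t) r) = 0 := hle hr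
    rw [hψalg] at this
    exact (Ideal.Quotient.eq_zero_iff_mem).1 this
  refine ⟨part1, ?_⟩
  intro Dt hD
  obtain ⟨r', hr'⟩ := hD t
  -- `ι t = x̄ ȳ` in `A`
  have hxy : algebraMap R (NodeAlgebra R t) t =
      Ideal.Quotient.mk (nodeIdeal R t) (MvPowerSeries.X 0) *
      Ideal.Quotient.mk (nodeIdeal R t) (MvPowerSeries.X 1) := by
    have : algebraMap R (NodeAlgebra R t) t =
        Ideal.Quotient.mk (nodeIdeal R t) (MvPowerSeries.C t : MvPowerSeries (Fin 2) R) := rfl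
    rw [this, ← map_mul]
    exact (Ideal.Quotient.eq.2 (Ideal.subset_span (Set.mem_singleton _))).symm
  have hmem : algebraMap R (NodeAlgebra R t) r' ∈
      Ideal.span {Ideal.Quotient.mk (nodeIdeal R t) (MvPowerSeries.X 0),
        Ideal.Quotient.mk (nodeIdeal R t) (MvPowerSeries.X 1)} := by
    rw [← hr', hxy, Derivation.leibniz]
    refine Ideal.add_mem _ ?_ ?_
    · exact Ideal.mul_mem_right _ _ (Ideal.subset_span (by simp))
    · exact Ideal.mul_mem_right _ _ (Ideal.subset_span (by simp))
  have := part1 r' hmem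
  rw [Ideal.mem_span_singleton] at this
  obtain ⟨s, hs⟩ := this
  exact ⟨s, by rw [hr', hs]⟩
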